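/- The number of actions outside loops strictly decreases under execution of an action at loop depth 0: if i —a@p→ i' with β(i,p) = 0 (the executed action occurrence is not under any loop operator), then η(i') ≤ η(i) − 1, where η counts actions outside loops. -/
import Mathlib


/-- Conflict predicate: trace `t` contains an action occurring on lifeline `l`. -/
def conflict {A L : Type} (theta : A → L) : List A → L → Prop
  | [], _ => False
  | a :: t, l => theta a = l ∨ conflict theta t l

/-- Conditional conflict predicate: trace `t` contains an action on lifeline `l` with `l ∉ r`. -/
def condConflict {A L : Type} (theta : A → L) (r : Set L) : List A → L → Prop
  | [], _ => False
  | a :: t, l => (theta a = l ∧ l ∉ r) ∨ condConflict theta r t l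

/-- Conditional sequencing: `CondSeq theta r t1 t2 t` means `t ∈ t1 ⫽_r t2`. -/
inductive CondSeq {A L : Type} (theta : A → L) (r : Set L) :
    List A → List A → List A → Prop
  | nil_left (t2 : List A) : CondSeq theta r [] t2 t2
  | nil_right (t1 : List A) : CondSeq theta r t1 [] t1
  | left {a1 a2 : A} {t1 t2 t : List A} :
      CondSeq theta r t1 (a2 :: t2) t →
      CondSeq theta r (a1 :: t1) (a2 :: t2) (a1 :: t)
  | right {a1 a2 : A} {t1 t2 t : List A} :
      CondSeq theta r (a1 :: t1) t2 t →
      ¬ condConflict theta r (a1 :: t1) (theta a2) →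
      CondSeq theta r (a1 :: t1) (a2 :: t2) (a2 :: t)

/-- Interaction terms. -/
inductive Interaction (A L : Type) where
  | empty : Interaction A L
  | act : A → Interaction A L
  | alt : Interaction A L → Interaction A L → Interaction A L
  | strict : Interaction A L → Interaction A L → Interaction A L
  | coreg : Set L → Interaction A L → Interaction A L → Interaction A L
  | loopS : Interaction A L → Interaction A L
  | loopC : Set L → Interaction A L → Interaction A L

/-- Concatenation (strict sequencing) of sets of traces. -/
def concatSet {A : Type} (S1 S2 : Set (List A)) : Set (List A) :=
  {t | ∃ u ∈ S1, ∃ v ∈ S2, t = u ++ v}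

/-- Conditional sequencing of sets of traces. -/
def condSeqSet {A L : Type} (theta : A → L) (r : Set L) (S1 S2 : Set (List A)) :
    Set (List A) :=
  {t | ∃ u ∈ S1, ∃ v ∈ S2, CondSeq theta r u v t}

/-- `j`-th power of a trace set under a binary scheduling operator. -/
def powOp {A : Type} (op : Set (List A) → Set (List A) → Set (List A))
    (S : Set (List A)) : ℕ → Set (List A)
  | 0 => {([] : List A)}
  | n + 1 => op S (powOp op S n)

/-- Kleene closure of a trace set under a binary scheduling operator. -/
def kleene {A : Type} (op : Set (List A) → Set (List A) → Set (List A))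
    (S : Set (List A)) : Set (List A) :=
  ⋃ n : ℕ, powOp op S n

/-- Denotational semantics of interactions (sets of global traces). -/
def rho {A L : Type} (theta : A → L) : Interaction A L → Set (List A)
  | .empty => {([] : List A)}
  | .act a => {[a]}
  | .alt i1 i2 => rho theta i1 ∪ rho theta i2
  | .strict i1 i2 => concatSet (rho theta i1) (rho theta i2)
  | .coreg r i1 i2 => condSeqSet theta r (rho theta i1) (rho theta i2)
  | .loopS i1 => kleene concatSet (rho theta i1)
  | .loopC r i1 => kleene (condSeqSet theta r) (rho theta i1)

/-- `CannotPrune theta L' i` : all behaviors of `i` involve an action on a lifeline of `L'`. -/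
inductive CannotPrune {A L : Type} (theta : A → L) (L' : Set L) : Interaction A L → Prop
  | act {a : A} : theta a ∈ L' → CannotPrune theta L' (.act a)
  | alt {i1 i2 : Interaction A L} :
      CannotPrune theta L' i1 → CannotPrune theta L' i2 → CannotPrune theta L' (.alt i1 i2)
  | strict_left {i1 i2 : Interaction A L} :
      CannotPrune theta L' i1 → CannotPrune theta L' (.strict i1 i2)
  | strict_right {i1 i2 : Interaction A L} :
      CannotPrune theta L' i2 → CannotPrune theta L' (.strict i1 i2)
  | coreg_left {r : Set L} {i1 i2 : Interaction A L} :
      CannotPrune theta L' i1 → CannotPrune theta L' (.coreg r i1 i2)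
  | coreg_right {r : Set L} {i1 i2 : Interaction A L} :
      CannotPrune theta L' i2 → CannotPrune theta L' (.coreg r i1 i2)

/-- Pruning relation: `Prunes theta L' i i'` means `i ↝_{L'} i'`. -/
inductive Prunes {A L : Type} (theta : A → L) (L' : Set L) :
    Interaction A L → Interaction A L → Prop
  | empty : Prunes theta L' .empty .empty
  | act {a : A} : theta a ∉ L' → Prunes theta L' (.act a) (.act a)
  | alt_both {i1 i2 i1' i2' : Interaction A L} :
      Prunes theta L' i1 i1' → Prunes theta L' i2 i2' →
      Prunes theta L' (.alt i1 i2) (.alt i1' i2')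
  | alt_left {i1 i2 i1' : Interaction A L} :
      Prunes theta L' i1 i1' → CannotPrune theta L' i2 →
      Prunes theta L' (.alt i1 i2) i1'
  | alt_right {i1 i2 i2' : Interaction A L} :
      Prunes theta L' i2 i2' → CannotPrune theta L' i1 →
      Prunes theta L' (.alt i1 i2) i2'
  | strict {i1 i2 i1' i2' : Interaction A L} :
      Prunes theta L' i1 i1' → Prunes theta L' i2 i2' →
      Prunes theta L' (.strict i1 i2) (.strict i1' i2')
  | coreg {r : Set L} {i1 i2 i1' i2' : Interaction A L} :
      Prunes theta L' i1 i1' → Prunes theta L' i2 i2' →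
      Prunes theta L' (.coreg r i1 i2) (.coreg r i1' i2')
  | loopS {i1 i1' : Interaction A L} :
      Prunes theta L' i1 i1' → Prunes theta L' (.loopS i1) (.loopS i1')
  | loopS_elim {i1 : Interaction A L} :
      CannotPrune theta L' i1 → Prunes theta L' (.loopS i1) .empty
  | loopC {r : Set L} {i1 i1' : Interaction A L} :
      Prunes theta L' i1 i1' → Prunes theta L' (.loopC r i1) (.loopC r i1')
  | loopC_elim {r : Set L} {i1 : Interaction A L} :
      CannotPrune theta L' i1 → Prunes theta L' (.loopC r i1) .empty

/-- Execution relation with positions: `ExecP theta i a p i'` means `i —a@p→ i'`,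
where a position is a word over `{1, 2}` encoded as `List Bool`
(`false` for direction 1, `true` for direction 2). -/
inductive ExecP {A L : Type} (theta : A → L) :
    Interaction A L → A → List Bool → Interaction A L → Prop
  | act (a : A) : ExecP theta (.act a) a [] .empty
  | alt_left {i1 i2 i1' : Interaction A L} {a : A} {p : List Bool} :
      ExecP theta i1 a p i1' → ExecP theta (.alt i1 i2) a (false :: p) i1'
  | alt_right {i1 i2 i2' : Interaction A L} {a : A} {p : List Bool} :
      ExecP theta i2 a p i2' → ExecP theta (.alt i1 i2) a (true :: p) i2'
  | strict_left {i1 i2 i1' : Interaction A L} {a : A} {p : List Bool} :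
      ExecP theta i1 a p i1' →
      ExecP theta (.strict i1 i2) a (false :: p) (.strict i1' i2)
  | strict_right {i1 i2 i2' : Interaction A L} {a : A} {p : List Bool} :
      Prunes theta Set.univ i1 .empty → ExecP theta i2 a p i2' →
      ExecP theta (.strict i1 i2) a (true :: p) i2'
  | coreg_left {r : Set L} {i1 i2 i1' : Interaction A L} {a : A} {p : List Bool} :
      ExecP theta i1 a p i1' →
      ExecP theta (.coreg r i1 i2) a (false :: p) (.coreg r i1' i2)
  | coreg_right {r : Set L} {i1 i2 i1' i2' : Interaction A L} {a : A} {p : List Bool} :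
      Prunes theta ({theta a} \ r) i1 i1' → ExecP theta i2 a p i2' →
      ExecP theta (.coreg r i1 i2) a (true :: p) (.coreg r i1' i2')
  | loopS {i1 i1' : Interaction A L} {a : A} {p : List Bool} :
      ExecP theta i1 a p i1' →
      ExecP theta (.loopS i1) a (false :: p) (.strict i1' (.loopS i1))
  | loopC {r : Set L} {i1 i1' i' : Interaction A L} {a : A} {p : List Bool} :
      ExecP theta i1 a p i1' → Prunes theta ({theta a} \ r) (.loopC r i1) i' →
      ExecP theta (.loopC r i1) a (false :: p)
        (.coreg r i' (.coreg r i1' (.loopC r i1)))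

/-- Loop depth `β(i, p)`: number of loop operators strictly above position `p`. -/
def loopDepth {A L : Type} : Interaction A L → List Bool → ℕ
  | _, [] => 0
  | .alt i1 _, false :: p => loopDepth i1 p
  | .alt _ i2, true :: p => loopDepth i2 p
  | .strict i1 _, false :: p => loopDepth i1 p
  | .strict _ i2, true :: p => loopDepth i2 p
  | .coreg _ i1 _, false :: p => loopDepth i1 p
  | .coreg _ _ i2, true :: p => loopDepth i2 p
  | .loopS i1, _ :: p => loopDepth i1 p + 1
  | .loopC _ i1, _ :: p => loopDepth i1 p + 1
  | .empty, _ :: _ => 0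
  | .act _, _ :: _ => 0

/-- `η(i)`: number of actions occurring outside loops. -/
def eta {A L : Type} : Interaction A L → ℕ
  | .empty => 0
  | .act _ => 1
  | .alt i1 i2 => max (eta i1) (eta i2)
  | .strict i1 i2 => eta i1 + eta i2
  | .coreg _ i1 i2 => eta i1 + eta i2
  | .loopS _ => 0
  | .loopC _ _ => 0

/-- Executing an action at loop depth 0 strictly decreases the number of actions
outside loops : `η(i') ≤ η(i) − 1`. -/
theorem eta_prunes_le {A L : Type} {theta : A → L} {L' : Set L}
    {i i' : Interaction A L} (h : Prunes theta L' i i') : eta i' ≤ eta i := by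
  induction h with
  | empty => simp [eta]
  | act _ => simp [eta]
  | alt_both _ _ ih1 ih2 => simp only [eta]; exact max_le_max ih1 ih2
  | alt_left _ _ ih => exact le_trans ih (le_max_left _ _)
  | alt_right _ _ ih => exact le_trans ih (le_max_right _ _)
  | strict _ _ ih1 ih2 => exact add_le_add ih1 ih2
  | coreg _ _ ih1 ih2 => exact add_le_add ih1 ih2
  | loopS _ _ => simp [eta]
  | loopS_elim _ => simp [eta]
  | loopC _ _ => simp [eta]
  | loopC_elim _ => simp [eta]

theorem eta_decreases_outside_loops {A L : Type} (theta : A → L)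
    (i i' : Interaction A L) (a : A) (p : List Bool)
    (hexec : ExecP theta i a p i') (hdepth : loopDepth i p = 0) :
    eta i' + 1 ≤ eta i := by
  induction hexec with
  | act a => simp [eta]
  | alt_left _ ih =>
      exact le_trans (ih hdepth) (le_max_left _ _)
  | alt_right _ ih =>
      exact le_trans (ih hdepth) (le_max_right _ _)
  | strict_left _ ih =>
      have := ih hdepth
      simp only [eta]; omega
  | strict_right hp _ ih =>
      have := ih hdepth
      simp only [eta]; omega
  | coreg_left _ ih =>
      have := ih hdepth
      simp only [eta]; omega
  | coreg_right hp _ ih =>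
      have h1 := eta_prunes_le hp
      have h2 := ih hdepth
      simp only [eta]; omega
  | loopS _ _ => simp [loopDepth] at hdepth
  | loopC _ _ _ => simp [loopDepth] at hdepth
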